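/- arXiv:2510.26975 — 2 statements merged into one kernel-verified Lean document; each statement's English description precedes it below -/
import Mathlib

section
/- Let (G, T) be a graft that is a strong comb with respect to a vertex r with tooth set B, and let F be a minimum join of (G, T). Then every vertex v ∈ B is incident to exactly one edge of F. -/
open SimpleGraph
open scoped Classical

variable {V : Type*} [Fintype V] [DecidableEq V]

/-- `(G, T)` is a graft: every connected component of `G` contains an even number
of vertices of `T`. -/
def IsGraft (G : SimpleGraph V) (T : Set V) : Prop :=
  ∀ v : V, Even {u ∈ T | G.Reachable v u}.ncard

/-- `F` is a join of `(G, T)`: `F ⊆ E(G)` and every vertex `v` is incident to an odd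
number of edges of `F` exactly when `v ∈ T`. -/
def IsJoin (G : SimpleGraph V) (T : Set V) (F : Set (Sym2 V)) : Prop :=
  F ⊆ G.edgeSet ∧ ∀ v : V, (Odd {e ∈ F | v ∈ e}.ncard ↔ v ∈ T)

/-- `F` is a minimum join of `(G, T)`. -/
def IsMinJoin (G : SimpleGraph V) (T : Set V) (F : Set (Sym2 V)) : Prop :=
  IsJoin G T F ∧ ∀ F' : Set (Sym2 V), IsJoin G T F' → F.ncard ≤ F'.ncard

/-- `F`-weight of an edge: `-1` if the edge is in `F`, `+1` otherwise. -/
noncomputable def ew (F : Set (Sym2 V)) (e : Sym2 V) : ℤ :=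
  if e ∈ F then -1 else 1

/-- `F`-weight of a walk: the sum of the `F`-weights of its edges. -/
noncomputable def walkWeight {G : SimpleGraph V} {x y : V} (F : Set (Sym2 V))
    (p : G.Walk x y) : ℤ :=
  (p.edges.map (ew F)).sum

/-- `F`-distance between `x` and `y`: the minimum `F`-weight of a path between them. -/
noncomputable def distF (G : SimpleGraph V) (F : Set (Sym2 V)) (x y : V) : ℤ :=
  sInf {w : ℤ | ∃ p : G.Walk x y, p.IsPath ∧ walkWeight F p = w}

/-- `F` covers the vertex `v`. -/
def Covers (F : Set (Sym2 V)) (v : V) : Prop := ∃ e ∈ F, v ∈ e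

/-- The edge set `F` is nonempty and determines a connected subgraph. -/
def ConnectedEdgeSet (F : Set (Sym2 V)) : Prop :=
  F.Nonempty ∧ ∀ x y : V, Covers F x → Covers F y →
    (SimpleGraph.fromEdgeSet F).Reachable x y

/-- `e` has exactly one endpoint in `K`. -/
def Crossing (K : Set V) (e : Sym2 V) : Prop :=
  ∃ x y : V, e = s(x, y) ∧ x ∈ K ∧ y ∉ K

/-- The subgraph of `G` induced on `S` (viewed as a graph on the same vertex type). -/
def sgRestrict (G : SimpleGraph V) (S : Set V) : SimpleGraph V where
  Adj x y := G.Adj x y ∧ x ∈ S ∧ y ∈ S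
  symm := ⟨fun x y h => ⟨h.1.symm, h.2.2, h.2.1⟩⟩
  loopless := ⟨fun x h => G.loopless.irrefl x h.1⟩

/-- The subgraph of `G` induced on `S`, with all edges having both endpoints in `L` deleted. -/
def sgRestrictDel (G : SimpleGraph V) (S L : Set V) : SimpleGraph V where
  Adj x y := G.Adj x y ∧ x ∈ S ∧ y ∈ S ∧ ¬(x ∈ L ∧ y ∈ L)
  symm := ⟨fun x y h => ⟨h.1.symm, h.2.2.1, h.2.1, fun hc => h.2.2.2 ⟨hc.2, hc.1⟩⟩⟩
  loopless := ⟨fun x h => G.loopless.irrefl x h.1⟩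

/-- `K` is (the vertex set of) a connected component of the subgraph of `G` induced on `S`. -/
def IsCompOn (G : SimpleGraph V) (S K : Set V) : Prop :=
  ∃ v ∈ S, K = {u | (sgRestrict G S).Reachable v u}

/-- `(G, T)` is a strong comb with respect to `r` with tooth set `B`. -/
def IsStrongComb (G : SimpleGraph V) (T : Set V) (r : V) (B : Set V) : Prop :=
  (∀ x ∈ B, ∀ y ∈ B, ¬G.Adj x y) ∧
  (∀ v : V, v ∉ B → ∃ b ∈ B, G.Adj v b) ∧
  r ∉ B ∧
  ∀ F : Set (Sym2 V), IsMinJoin G T F →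
    (∀ x ∈ B, distF G F r x = -1) ∧ (∀ x : V, x ∉ B → distF G F r x = 0)


section AuxLemmas

variable {V : Type*} [Fintype V] [DecidableEq V]

lemma ew_ge (F : Set (Sym2 V)) (e : Sym2 V) : (-1 : ℤ) ≤ ew F e := by
  unfold ew; split <;> omega

lemma walkWeight_ge {G : SimpleGraph V} {x y : V} (F : Set (Sym2 V)) (p : G.Walk x y) :
    -(p.edges.length : ℤ) ≤ walkWeight F p := by
  unfold walkWeight
  generalize p.edges = l
  induction l with
  | nil => simp
  | cons a l ih =>
    simp only [List.map_cons, List.sum_cons, List.length_cons]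
    have := ew_ge F a
    push_cast
    omega

lemma distSet_bddBelow (G : SimpleGraph V) (F : Set (Sym2 V)) (x y : V) :
    BddBelow {w : ℤ | ∃ p : G.Walk x y, p.IsPath ∧ walkWeight F p = w} := by
  refine ⟨-(Fintype.card V : ℤ), ?_⟩
  rintro w ⟨p, hp, rfl⟩
  have h1 := walkWeight_ge F p
  have h2 : p.edges.length < Fintype.card V := by
    rw [SimpleGraph.Walk.length_edges]; exact hp.length_lt
  omega

lemma distF_le {G : SimpleGraph V} (F : Set (Sym2 V)) {x y : V} (p : G.Walk x y)
    (hp : p.IsPath) : distF G F x y ≤ walkWeight F p :=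
  csInf_le (distSet_bddBelow G F x y) ⟨p, hp, rfl⟩

lemma distF_exists {G : SimpleGraph V} (F : Set (Sym2 V)) {x y : V}
    (h : distF G F x y ≠ 0) :
    ∃ p : G.Walk x y, p.IsPath ∧ walkWeight F p = distF G F x y := by
  by_cases hne : {w : ℤ | ∃ p : G.Walk x y, p.IsPath ∧ walkWeight F p = w}.Nonempty
  · obtain ⟨p, hp, hw⟩ := Int.csInf_mem hne (distSet_bddBelow G F x y)
    exact ⟨p, hp, hw⟩
  · exfalso; apply h
    unfold distF
    rw [Set.not_nonempty_iff_eq_empty.mp hne]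
    exact Int.csInf_empty

lemma walkWeight_cons {G : SimpleGraph V} {x y z : V} (F : Set (Sym2 V))
    (h : G.Adj x y) (p : G.Walk y z) :
    walkWeight F (SimpleGraph.Walk.cons h p) = ew F s(x, y) + walkWeight F p := by
  unfold walkWeight
  simp

lemma walkWeight_append {G : SimpleGraph V} {x y z : V} (F : Set (Sym2 V))
    (p : G.Walk x y) (q : G.Walk y z) :
    walkWeight F (p.append q) = walkWeight F p + walkWeight F q := by
  unfold walkWeight
  simp

lemma walkWeight_reverse {G : SimpleGraph V} {x y : V} (F : Set (Sym2 V))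
    (p : G.Walk x y) : walkWeight F p.reverse = walkWeight F p := by
  unfold walkWeight
  rw [SimpleGraph.Walk.edges_reverse, List.map_reverse, List.sum_reverse]

lemma path_edges_eq {G : SimpleGraph V} {a b : V} (p : G.Walk a b) (hp : p.IsPath)
    (h : s(a, b) ∈ p.edges) : p.edges = [s(a, b)] := by
  cases p with
  | nil => simp at h
  | @cons _ c _ hadj q =>
    rw [SimpleGraph.Walk.cons_isPath_iff] at hp
    rw [SimpleGraph.Walk.edges_cons] at h ⊢
    rcases List.mem_cons.mp h with heq | hmem
    · have hbc : b = c := by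
        rw [Sym2.eq_iff] at heq
        rcases heq with ⟨-, h2⟩ | ⟨h1, -⟩
        · exact h2
        · exact absurd h1 hadj.ne
      subst hbc
      have : q = SimpleGraph.Walk.nil := (SimpleGraph.Walk.isPath_iff_eq_nil (p := q)).mp hp.1
      rw [this]
      simp
    · exact absurd (SimpleGraph.Walk.fst_mem_support_of_mem_edges q hmem) hp.2

lemma no_neg_cycle {G : SimpleGraph V} {T : Set V} {F : Set (Sym2 V)}
    (hF : IsMinJoin G T F) {x : V} {C : G.Walk x x} (hC : C.IsCycle) :
    0 ≤ walkWeight F C := by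
  by_contra hneg
  push_neg at hneg
  set S : Set (Sym2 V) := {e | e ∈ C.edges} with hSdef
  have hnodup : C.edges.Nodup := hC.isCircuit.isTrail.edges_nodup
  have hScoe : S = (C.edges.toFinset : Set (Sym2 V)) := by
    rw [List.coe_toFinset]
  -- weight formula
  have hwS : walkWeight F C = ((S \ F).ncard : ℤ) - ((S ∩ F).ncard : ℤ) := by
    have h1 : walkWeight F C = ∑ e ∈ C.edges.toFinset, ew F e := by
      unfold walkWeight
      rw [List.sum_toFinset _ hnodup]
    have h2 : ∑ e ∈ C.edges.toFinset, ew F e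
        = ∑ e ∈ C.edges.toFinset.filter (· ∈ F), (-1 : ℤ)
          + ∑ e ∈ C.edges.toFinset.filter (¬ · ∈ F), (1 : ℤ) := by
      rw [← Finset.sum_filter_add_sum_filter_not C.edges.toFinset (· ∈ F)]
      congr 1
      · apply Finset.sum_congr rfl
        intro e he
        unfold ew
        rw [if_pos (Finset.mem_filter.mp he).2]
      · apply Finset.sum_congr rfl
        intro e he
        unfold ew
        rw [if_neg (Finset.mem_filter.mp he).2]
    have h3 : (S ∩ F).ncard = (C.edges.toFinset.filter (· ∈ F)).card := by
      rw [hScoe]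
      rw [← Set.ncard_coe_finset]
      congr 1
      ext e
      simp [Finset.mem_filter]

    have h4 : (S \ F).ncard = (C.edges.toFinset.filter (¬ · ∈ F)).card := by
      rw [hScoe]
      rw [← Set.ncard_coe_finset]
      congr 1
      ext e
      simp [Finset.mem_filter]

    rw [h1, h2, h3, h4]
    simp [Finset.sum_const]
    ring
  -- the symmetric difference
  set F' : Set (Sym2 V) := (F \ S) ∪ (S \ F) with hF'def
  have hJoin : IsJoin G T F' := by
    constructor
    · rintro e (⟨he, -⟩ | ⟨he, -⟩)
      · exact hF.1.1 he
      · exact SimpleGraph.Walk.edges_subset_edgeSet C he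
    · intro y
      rw [← hF.1.2 y]
      set A := {e ∈ F | y ∈ e} with hA
      set D := {e ∈ S | y ∈ e} with hD
      have hA' : {e ∈ F' | y ∈ e} = (A \ D) ∪ (D \ A) := by
        ext e
        simp only [hF'def, hA, hD, Set.mem_setOf_eq, Set.mem_union, Set.mem_diff,
          Set.mem_sep_iff]
        tauto
      have hdisj : Disjoint (A \ D) (D \ A) := by
        rw [Set.disjoint_left]
        rintro e ⟨-, h1⟩ ⟨h2, -⟩
        exact h1 h2
      have hDeven : Even D.ncard := by
        have heven := hC.isCircuit.isTrail.even_countP_edges_iff y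
        have heven' : Even (C.edges.countP fun e => y ∈ e) := heven.mpr (fun h => absurd rfl h)
        have hcount : D.ncard = C.edges.countP fun e => y ∈ e := by
          have hDeq : D = ((C.edges.filter fun e => y ∈ e).toFinset : Set (Sym2 V)) := by
            ext e
            simp only [hD, hSdef, Set.mem_setOf_eq, List.coe_toFinset, List.mem_filter,
              Set.mem_sep_iff, decide_eq_true_eq]
          rw [hDeq, Set.ncard_coe_finset,
            List.toFinset_card_of_nodup (hnodup.filter _), List.countP_eq_length_filter]
        rwa [hcount]
      rw [hA', Set.ncard_union_eq hdisj (Set.toFinite _) (Set.toFinite _)]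
      have e1 := Set.ncard_inter_add_ncard_diff_eq_ncard A D (Set.toFinite _)
      have e2 := Set.ncard_inter_add_ncard_diff_eq_ncard D A (Set.toFinite _)
      have e3 : (A ∩ D).ncard = (D ∩ A).ncard := by rw [Set.inter_comm]
      rw [Nat.even_iff] at hDeven
      rw [Nat.odd_iff, Nat.odd_iff]
      omega
  have hcard : F'.ncard + (S ∩ F).ncard = F.ncard + (S \ F).ncard := by
    have hdisj : Disjoint (F \ S) (S \ F) := by
      rw [Set.disjoint_left]
      rintro e ⟨-, h1⟩ ⟨h2, -⟩
      exact h1 h2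
    rw [hF'def, Set.ncard_union_eq hdisj (Set.toFinite _) (Set.toFinite _)]
    have e1 := Set.ncard_inter_add_ncard_diff_eq_ncard F S (Set.toFinite _)
    have e3 : (F ∩ S).ncard = (S ∩ F).ncard := by rw [Set.inter_comm]
    omega
  have hmin := hF.2 F' hJoin
  omega

end AuxLemmas

/-- if the graft `(G, T)` is a strong comb with respect to `r` with tooth
set `B` and `F` is a minimum join, then every `v ∈ B` is incident to exactly one edge of `F`. -/
theorem stmt_4 (G : SimpleGraph V) (T : Set V) (r : V) (B : Set V)
    (hG : IsGraft G T) (hcomb : IsStrongComb G T r B)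
    (F : Set (Sym2 V)) (hF : IsMinJoin G T F) :
    ∀ v ∈ B, {e ∈ F | v ∈ e}.ncard = 1 := by
  intro v hv
  obtain ⟨hstable, hdom, hrB, hdist⟩ := hcomb
  obtain ⟨hdistB, hdistNB⟩ := hdist F hF
  have hrv : r ≠ v := fun h => hrB (h ▸ hv)
  have hdv : distF G F r v = -1 := hdistB v hv
  obtain ⟨P, hP, hPw⟩ := distF_exists F (show distF G F r v ≠ 0 by rw [hdv]; omega)
  rw [hdv] at hPw
  -- decompose P from the end : P.reverse = cons hadj q
  have hPrnil : ¬ P.reverse.Nil := by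
    rw [SimpleGraph.Walk.nil_iff_length_eq, SimpleGraph.Walk.length_reverse]
    intro h
    exact hrv (SimpleGraph.Walk.eq_of_length_eq_zero h)
  obtain ⟨u, hadj, q, hq⟩ := SimpleGraph.Walk.not_nil_iff.mp hPrnil
  -- hadj : G.Adj v u, q : G.Walk u r, P.reverse = cons hadj q
  have hqP : q.IsPath ∧ v ∉ q.support := by
    have := hP.reverse
    rw [hq, SimpleGraph.Walk.cons_isPath_iff] at this
    exact this
  have hPedges : P.edges = q.edges.reverse ++ [s(v, u)] := by
    have h1 : P.edges = P.reverse.edges.reverse := by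
      rw [SimpleGraph.Walk.edges_reverse, List.reverse_reverse]
    rw [h1, hq, SimpleGraph.Walk.edges_cons, List.reverse_cons]
  have hWsum : walkWeight F q + ew F s(v, u) = -1 := by
    rw [← hPw]
    unfold walkWeight
    rw [hPedges]
    simp [List.sum_reverse]
  have huB : u ∉ B := fun hu => hstable v hv u hu hadj
  have hq0 : 0 ≤ walkWeight F q := by
    have hle := distF_le F q.reverse hqP.1.reverse
    rw [hdistNB u huB, walkWeight_reverse] at hle
    exact hle
  have heF : s(v, u) ∈ F := by
    by_contra h
    have : ew F s(v, u) = 1 := by unfold ew; rw [if_neg h]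
    omega
  have hset : {e ∈ F | v ∈ e} = {s(v, u)} := by
    apply Set.eq_singleton_iff_unique_mem.mpr
    refine ⟨⟨heF, Sym2.mem_mk_left v u⟩, ?_⟩
    rintro f ⟨hfF, hvf⟩
    obtain ⟨w, rfl⟩ := Sym2.mem_iff_exists.mp hvf
    have hadjw : G.Adj v w := (G.mem_edgeSet).mp (hF.1.1 hfF)
    have hwB : w ∉ B := fun hw => hstable v hv w hw hadjw
    have hdw : distF G F r w = 0 := hdistNB w hwB
    by_cases hws : w ∈ P.support
    · -- split P at w
      have hsplit : walkWeight F (P.takeUntil w hws) + walkWeight F (P.dropUntil w hws)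
          = -1 := by
        rw [← walkWeight_append, SimpleGraph.Walk.take_spec P hws, hPw]
      have hP1 : (P.takeUntil w hws).IsPath := hP.takeUntil hws
      have hP2 : (P.dropUntil w hws).IsPath := hP.dropUntil hws
      have h10 : 0 ≤ walkWeight F (P.takeUntil w hws) := by
        have hle := distF_le F (P.takeUntil w hws) hP1
        rwa [hdw] at hle
      have h2neg : walkWeight F (P.dropUntil w hws) ≤ -1 := by omega
      by_cases hfP2 : s(w, v) ∈ (P.dropUntil w hws).edges
      · -- then the drop part is a single edge, which must be the last edge of P
        have hone := path_edges_eq (P.dropUntil w hws) hP2 hfP2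
        have hPe2 : P.edges = (P.takeUntil w hws).edges ++ [s(w, v)] := by
          conv_lhs => rw [← SimpleGraph.Walk.take_spec P hws]
          rw [SimpleGraph.Walk.edges_append, hone]
        have hlast : some s(w, v) = some s(v, u) := by
          rw [← List.getLast?_concat (l := (P.takeUntil w hws).edges), ← hPe2, hPedges,
            List.getLast?_concat]
        have := Option.some.inj hlast
        rw [Sym2.eq_swap]
        exact this
      · -- otherwise we get a negative cycle
        exfalso
        have hC : (SimpleGraph.Walk.cons hadjw (P.dropUntil w hws)).IsCycle := by
          rw [SimpleGraph.Walk.cons_isCycle_iff]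
          refine ⟨hP2, ?_⟩
          rwa [Sym2.eq_swap]
        have hCw := no_neg_cycle hF hC
        rw [walkWeight_cons] at hCw
        have : ew F s(v, w) = -1 := by unfold ew; rw [if_pos hfF]
        omega
    · -- extend P by the edge vw to get a too-short path to w
      exfalso
      have hws' : w ∉ P.reverse.support := by
        rw [SimpleGraph.Walk.support_reverse, List.mem_reverse]
        exact hws
      have hpath : (SimpleGraph.Walk.cons hadjw.symm P.reverse).IsPath := by
        rw [SimpleGraph.Walk.cons_isPath_iff]
        exact ⟨hP.reverse, hws'⟩
      have hle := distF_le F (SimpleGraph.Walk.cons hadjw.symm P.reverse).reverse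
        hpath.reverse
      rw [hdw, walkWeight_reverse, walkWeight_cons, walkWeight_reverse, hPw] at hle
      have : ew F s(w, v) = -1 := by
        unfold ew
        rw [Sym2.eq_swap, if_pos hfF]
      omega
  rw [hset]
  exact Set.ncard_singleton _
end

section
/- Let (G, T) be a rake with head r and tooth set B, and for each b ∈ B let (H_b, T_b) ∈ P(r_b, A_b), these grafts being mutually disjoint and disjoint from G, and for each b ∈ B let F_b be a connected minimum join of (H_b, T_b) covering r_b. Let (Ĝ, T̂) be a gluing sum of (G, T) and the (H_b, T_b). Then F̂ := {rr_b : b ∈ B} ∪ ⋃_{b∈B} F_b is a connected minimum join of (Ĝ, T̂) that covers r. -/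
open SimpleGraph
open scoped Classical

variable {V : Type*} [Fintype V] [DecidableEq V]

/-- `(G, T)` is a rake with head `r` and tooth set `B`, viewed as a graph whose
vertex set is `S` (all edges of `G` lie inside `S`). -/
def IsRakeOn (S : Set V) (G : SimpleGraph V) (T : Set V) (r : V) (B : Set V) : Prop :=
  (∀ x y : V, G.Adj x y → x ∈ S ∧ y ∈ S) ∧
  B ⊆ T ∧ T ⊆ S ∧
  (∀ x ∈ B, ∀ y ∈ B, ¬G.Adj x y) ∧
  (∀ v ∈ S \ B, ∃ b ∈ B, G.Adj v b) ∧
  r ∈ S \ B ∧ (∀ b ∈ B, G.Adj r b) ∧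
  (Odd B.ncard → T = B ∪ {r}) ∧ (¬Odd B.ncard → T = B)

/-- The edge set of a gluing sum: the edges of the rake `G` avoiding the tooth set `B`,
for each edge `xb` of `G` with `b ∈ B` the edge `x f_b(xb)`, and all edges of the
grafts `GH b` glued at the teeth. -/
def glueEdges (G : SimpleGraph V) (B : Set V) (GH : V → SimpleGraph V)
    (f : V → V → V) : Set (Sym2 V) :=
  {e ∈ G.edgeSet | ∀ v ∈ e, v ∉ B} ∪
  {e : Sym2 V | ∃ b ∈ B, ∃ x : V, G.Adj x b ∧ e = s(x, f b x)} ∪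
  ⋃ b ∈ B, (GH b).edgeSet

/-- The graph of a gluing sum. -/
def glueGraph (G : SimpleGraph V) (B : Set V) (GH : V → SimpleGraph V)
    (f : V → V → V) : SimpleGraph V :=
  SimpleGraph.fromEdgeSet (glueEdges G B GH f)

/-- The `T`-set of a gluing sum: `(T ∖ B) ∪ ⋃_{b ∈ B} (T_b Δ {r_b})`. -/
def glueT (T B : Set V) (TH : V → Set V) (rb : V → V) : Set V :=
  (T \ B) ∪ ⋃ b ∈ B, symmDiff (TH b) {rb b}

/-- The vertex set of a gluing sum. -/
def glueSupport (S B : Set V) (SH : V → Set V) : Set V :=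
  (S \ B) ∪ ⋃ b ∈ B, SH b

/-- The class `P(r, A)`, defined inductively. `PClass S G T r A` means the graft
`(G, T)` with vertex set `S` belongs to `P(r, A)`. -/
inductive PClass : Set V → SimpleGraph V → Set V → V → Set V → Prop
  /-- Every rake with head `r` and tooth set `B` belongs to `P(r, V(G) ∖ B)`. -/
  | base (S : Set V) (G : SimpleGraph V) (T : Set V) (r : V) (B : Set V) :
      IsRakeOn S G T r B → PClass S G T r (S \ B)
  /-- Gluing a family of members `(GH b, TH b) ∈ P(rb b, Ab b)` (`b ∈ B`), mutually
  disjoint and disjoint from the rake `(G, T)`, onto the teeth of the rake. -/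
  | glue (S : Set V) (G : SimpleGraph V) (T : Set V) (r : V) (B : Set V)
      (SH : V → Set V) (GH : V → SimpleGraph V) (TH : V → Set V)
      (rb : V → V) (Ab : V → Set V) (f : V → V → V) :
      IsRakeOn S G T r B →
      (∀ b ∈ B, PClass (SH b) (GH b) (TH b) (rb b) (Ab b)) →
      (∀ b ∈ B, ∀ b' ∈ B, b ≠ b' → Disjoint (SH b) (SH b')) →
      (∀ b ∈ B, Disjoint (SH b) S) →
      (∀ b ∈ B, ∀ x : V, G.Adj x b → f b x ∈ Ab b) →
      (∀ b ∈ B, f b r = rb b) →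
      PClass (glueSupport S B SH) (glueGraph G B GH f) (glueT T B TH rb) r (S \ B)
/-- degree of `v` in edge set `F`. -/
noncomputable def degS (F : Set (Sym2 V)) (v : V) : ℕ := {e ∈ F | v ∈ e}.ncard

lemma degS_union {F F' : Set (Sym2 V)} (h : Disjoint F F') (v : V) :
    degS (F ∪ F') v = degS F v + degS F' v := by
  unfold degS
  rw [show {e ∈ F ∪ F' | v ∈ e} = {e ∈ F | v ∈ e} ∪ {e ∈ F' | v ∈ e} by
    ext e; simp only [Set.mem_setOf_eq, Set.mem_union]; tauto]
  exact Set.ncard_union_eq (h.mono (Set.sep_subset _ _) (Set.sep_subset _ _))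

lemma degS_insert {F : Set (Sym2 V)} {e : Sym2 V} (he : e ∉ F) (v : V) :
    degS (insert e F) v = (if v ∈ e then 1 else 0) + degS F v := by
  rw [Set.insert_eq, degS_union (by simpa using he)]
  congr 1
  unfold degS
  by_cases hv : v ∈ e
  · rw [if_pos hv]
    rw [show {e' ∈ ({e} : Set (Sym2 V)) | v ∈ e'} = {e} by
      ext e'
      simp only [Set.mem_singleton_iff, Set.mem_setOf_eq]
      exact ⟨fun h => h.1, fun h => ⟨h, h ▸ hv⟩⟩]
    exact Set.ncard_singleton e
  · rw [if_neg hv]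
    rw [show {e' ∈ ({e} : Set (Sym2 V)) | v ∈ e'} = (∅ : Set (Sym2 V)) by
      ext e'
      simp only [Set.mem_singleton_iff, Set.mem_setOf_eq, Set.mem_empty_iff_false, iff_false,
        not_and]
      rintro rfl; exact hv]
    simp

lemma degS_zero {F : Set (Sym2 V)} {v : V} (h : ∀ e ∈ F, v ∉ e) : degS F v = 0 := by
  unfold degS
  rw [show {e ∈ F | v ∈ e} = (∅ : Set (Sym2 V)) by
    ext e; simp only [Set.mem_setOf_eq, Set.mem_empty_iff_false, iff_false, not_and]
    exact fun he => h e he]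
  simp

lemma even_symmDiff_ncard (Y Z : Set V) :
    Even (symmDiff Y Z).ncard ↔ (Even Y.ncard ↔ Even Z.ncard) := by
  have h1 : Y.ncard = (Y \ Z).ncard + (Y ∩ Z).ncard := by
    rw [← Set.ncard_union_eq Set.disjoint_sdiff_inter, Set.diff_union_inter]
  have h2 : Z.ncard = (Z \ Y).ncard + (Y ∩ Z).ncard := by
    rw [Set.inter_comm, ← Set.ncard_union_eq Set.disjoint_sdiff_inter, Set.diff_union_inter]
  have h3 : (symmDiff Y Z).ncard = (Y \ Z).ncard + (Z \ Y).ncard := by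
    rw [Set.symmDiff_def, Set.ncard_union_eq]
    exact Set.disjoint_of_subset Set.diff_subset (Set.diff_subset_compl _ _) disjoint_compl_right
  rw [h1, h2, h3]
  simp only [Nat.even_iff]
  omega

lemma even_oddDegSet (F : Set (Sym2 V)) (hF : ∀ e ∈ F, ¬ e.IsDiag) :
    Even {v | Odd (degS F v)}.ncard := by
  revert hF
  induction F, (Set.toFinite F) using Set.Finite.induction_on with
  | empty =>
    intro _
    have : {v | Odd (degS (∅ : Set (Sym2 V)) v)} = ∅ := by
      ext v; simp [degS]
    simp [this]
  | @insert e F henf hFfin ih =>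
    intro hF
    have hF' : ∀ e ∈ F, ¬ e.IsDiag := fun e he => hF e (Set.mem_insert_of_mem _ he)
    induction e using Sym2.inductionOn with
    | hf x y =>
      have hxy : x ≠ y := by
        have := hF _ (Set.mem_insert _ _); simpa using this
      have hset : {v | Odd (degS (insert s(x,y) F) v)}
          = symmDiff {v | Odd (degS F v)} {x, y} := by
        ext v
        rw [Set.mem_setOf_eq, degS_insert henf]
        by_cases hv : v ∈ s(x,y)
        · have hv' : v ∈ ({x, y} : Set V) := by
            rcases Sym2.mem_iff.mp hv with rfl | rfl
            · exact Set.mem_insert _ _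
            · exact Set.mem_insert_of_mem _ rfl
          rw [if_pos hv, add_comm, Nat.odd_add_one, Set.mem_symmDiff]
          constructor
          · intro h; exact Or.inr ⟨hv', h⟩
          · rintro (⟨h1, h2⟩ | ⟨h1, h2⟩)
            · exact absurd hv' h2
            · exact h2
        · have hv' : v ∉ ({x, y} : Set V) := by
            intro hc
            rcases hc with rfl | hc
            · exact hv (Sym2.mem_mk_left _ _)
            · rw [Set.mem_singleton_iff] at hc; subst hc; exact hv (Sym2.mem_mk_right _ _)
          rw [if_neg hv, zero_add, Set.mem_symmDiff]
          constructor
          · intro h; exact Or.inl ⟨h, hv'⟩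
          · rintro (⟨h1, h2⟩ | ⟨h1, h2⟩)
            · exact h1
            · exact absurd h1 hv'
      rw [hset, even_symmDiff_ncard]
      exact iff_of_true (ih hF') (by rw [Set.ncard_pair hxy]; exact even_two)

lemma ncard_biUnion {ι : Type*} {α : Type*} [Fintype α] (s : Finset ι) (W : ι → Set α)
    (h : ∀ i ∈ s, ∀ j ∈ s, i ≠ j → Disjoint (W i) (W j)) :
    (⋃ i ∈ s, W i).ncard = ∑ i ∈ s, (W i).ncard := by
  classical
  induction s using Finset.induction_on with
  | empty => simp
  | @insert a s ha ih =>
    rw [Finset.set_biUnion_insert, Finset.sum_insert ha,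
      Set.ncard_union_eq, ih (fun i hi j hj hij => h i (Finset.mem_insert_of_mem hi)
        j (Finset.mem_insert_of_mem hj) hij)]
    · exact Set.disjoint_iUnion₂_right.mpr fun i hi =>
        h a (Finset.mem_insert_self _ _) i (Finset.mem_insert_of_mem hi)
          (fun he => ha (he ▸ hi))

section GlueFacts

variable {S : Set V} {G : SimpleGraph V} {T : Set V} {r : V} {B : Set V}
  {SH : V → Set V} {GH : V → SimpleGraph V} {TH : V → Set V}
  {rb : V → V} {Ab : V → Set V} {f : V → V → V}

lemma rake_T_subset (hrake : IsRakeOn S G T r B) : T ⊆ B ∪ {r} := by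
  obtain ⟨-, -, -, -, -, -, -, hodd, heven⟩ := hrake
  by_cases h : Odd B.ncard
  · rw [hodd h]
  · rw [heven h]; exact Set.subset_union_left

lemma memGlueT_of_memSH (hrake : IsRakeOn S G T r B)
    (hdisj : ∀ b ∈ B, ∀ b' ∈ B, b ≠ b' → Disjoint (SH b) (SH b'))
    (hdisjS : ∀ b ∈ B, Disjoint (SH b) S)
    (hTS : ∀ b ∈ B, TH b ⊆ SH b) (hrbSH : ∀ b ∈ B, rb b ∈ SH b)
    {b : V} (hb : b ∈ B) {v : V} (hv : v ∈ SH b) :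
    v ∈ glueT T B TH rb ↔ v ∈ symmDiff (TH b) {rb b} := by
  unfold glueT
  rw [Set.mem_union]
  constructor
  · rintro (hvT | hvU)
    · exact absurd (hrake.2.2.1 hvT.1) (Set.disjoint_left.mp (hdisjS b hb) hv)
    · simp only [Set.mem_iUnion] at hvU
      obtain ⟨b', hb', hv'⟩ := hvU
      by_cases hbb : b = b'
      · exact hbb ▸ hv'
      · exfalso
        have hv'' : v ∈ SH b' := by
          rcases Set.mem_symmDiff.mp hv' with ⟨h1, -⟩ | ⟨h1, -⟩
          · exact hTS b' hb' h1
          · exact Set.mem_singleton_iff.mp h1 ▸ hrbSH b' hb'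
        exact Set.disjoint_left.mp (hdisj b hb b' hb' hbb) hv hv''
  · intro h
    right
    simp only [Set.mem_iUnion]
    exact ⟨b, hb, h⟩

/-- The gluing of joins is a join of the glued graft, with the expected cardinality. -/
lemma glue_join
    (hrake : IsRakeOn S G T r B)
    (hdisj : ∀ b ∈ B, ∀ b' ∈ B, b ≠ b' → Disjoint (SH b) (SH b'))
    (hdisjS : ∀ b ∈ B, Disjoint (SH b) S)
    (hf : ∀ b ∈ B, ∀ x : V, G.Adj x b → f b x ∈ Ab b)
    (hfr : ∀ b ∈ B, f b r = rb b)
    (hedge : ∀ b ∈ B, ∀ e ∈ (GH b).edgeSet, ∀ v ∈ e, v ∈ SH b)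
    (hTS : ∀ b ∈ B, TH b ⊆ SH b)
    (hAS : ∀ b ∈ B, Ab b ⊆ SH b)
    (K : V → Set (Sym2 V)) (hK : ∀ b ∈ B, IsJoin (GH b) (TH b) (K b)) :
    IsJoin (glueGraph G B GH f) (glueT T B TH rb)
      ({e : Sym2 V | ∃ b ∈ B, e = s(r, rb b)} ∪ ⋃ b ∈ B, K b) ∧
    ({e : Sym2 V | ∃ b ∈ B, e = s(r, rb b)} ∪ ⋃ b ∈ B, K b).ncard
      = ∑ b ∈ B.toFinite.toFinset, ((K b).ncard + 1) := by
  obtain ⟨hGS, hBT, hTS0, hstab, hcov, ⟨hrSmem, hrB⟩, hradj, hodd, heven⟩ := hrake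
  set Fhat := ({e : Sym2 V | ∃ b ∈ B, e = s(r, rb b)} ∪ ⋃ b ∈ B, K b) with hFhat
  have hrbSH : ∀ b ∈ B, rb b ∈ SH b := fun b hb =>
    hAS b hb (hfr b hb ▸ hf b hb r (hradj b hb))
  have hSnS : ∀ b ∈ B, ∀ v ∈ SH b, v ∉ S := fun b hb v hv =>
    Set.disjoint_left.mp (hdisjS b hb) hv
  have hrbr : ∀ b ∈ B, rb b ≠ r := fun b hb h =>
    hSnS b hb (rb b) (hrbSH b hb) (h ▸ hrSmem)
  have hrb_inj : ∀ b ∈ B, ∀ b' ∈ B, rb b = rb b' → b = b' := by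
    intro b hb b' hb' h
    by_contra hne
    exact Set.disjoint_left.mp (hdisj b hb b' hb' hne) (hrbSH b hb) (h ▸ hrbSH b' hb')
  have hKedge : ∀ b ∈ B, ∀ e ∈ K b, ∀ v ∈ e, v ∈ SH b := fun b hb e he v hv =>
    hedge b hb e ((hK b hb).1 he) v hv
  have hsnotK : ∀ b ∈ B, ∀ b' ∈ B, s(r, rb b) ∉ K b' := by
    intro b hb b' hb' hc
    exact hSnS b' hb' r (hKedge b' hb' _ hc r (Sym2.mem_mk_left r _)) hrSmem
  have hsne : ∀ b ∈ B, ∀ b' ∈ B, b ≠ b' → s(r, rb b) ≠ s(r, rb b') := by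
    intro b hb b' hb' hne h
    exact hne (hrb_inj b hb b' hb' (Sym2.congr_right.mp h))
  -- the sets W b
  set W : V → Set (Sym2 V) := fun b => insert (s(r, rb b)) (K b) with hW
  have hWmem : ∀ b ∈ B, ∀ e ∈ W b, ∀ v ∈ e, v = r ∨ v ∈ SH b := by
    intro b hb e he v hv
    rcases Set.mem_insert_iff.mp he with rfl | he'
    · rcases Sym2.mem_iff.mp hv with rfl | rfl
      · exact Or.inl rfl
      · exact Or.inr (hrbSH b hb)
    · exact Or.inr (hKedge b hb e he' v hv)
  have hWdisj : ∀ b ∈ B, ∀ b' ∈ B, b ≠ b' → Disjoint (W b) (W b') := by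
    intro b hb b' hb' hne
    rw [Set.disjoint_left]
    intro e he he'
    rcases Set.mem_insert_iff.mp he with rfl | he1
    · rcases Set.mem_insert_iff.mp he' with h | h
      · exact hsne b hb b' hb' hne h
      · exact hsnotK b hb b' hb' h
    · rcases Set.mem_insert_iff.mp he' with h | h
      · exact hsnotK b' hb' b hb (h ▸ he1)
      · induction e using Sym2.inductionOn with
        | hf x y =>
          exact Set.disjoint_left.mp (hdisj b hb b' hb' hne)
            (hKedge b hb _ he1 x (Sym2.mem_mk_left x y))
            (hKedge b' hb' _ h x (Sym2.mem_mk_left x y))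
  have hFeq : Fhat = ⋃ b ∈ B.toFinite.toFinset, W b := by
    rw [hFhat]
    ext e
    simp only [Set.mem_union, Set.mem_setOf_eq, Set.mem_iUnion, Set.Finite.mem_toFinset, hW,
      Set.mem_insert_iff]
    constructor
    · rintro (⟨b, hb, rfl⟩ | ⟨b, hb, he⟩)
      · exact ⟨b, hb, Or.inl rfl⟩
      · exact ⟨b, hb, Or.inr he⟩
    · rintro ⟨b, hb, rfl | he⟩
      · exact Or.inl ⟨b, hb, rfl⟩
      · exact Or.inr ⟨b, hb, he⟩
  have hcard : Fhat.ncard = ∑ b ∈ B.toFinite.toFinset, ((K b).ncard + 1) := by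
    rw [hFeq, ncard_biUnion]
    · apply Finset.sum_congr rfl
      intro b hb
      rw [Set.Finite.mem_toFinset] at hb
      rw [hW]
      simp only
      rw [Set.ncard_insert_of_notMem (hsnotK b hb b hb), add_comm]
    · intro i hi j hj hij
      rw [Set.Finite.mem_toFinset] at hi hj
      exact hWdisj i hi j hj hij
  refine ⟨⟨?_, ?_⟩, hcard⟩
  · -- F̂ ⊆ edges of glued graph
    intro e he
    rw [glueGraph, SimpleGraph.edgeSet_fromEdgeSet, Set.mem_diff]
    rcases (Set.mem_union _ _ _).mp he with hs | hu
    · obtain ⟨b, hb, rfl⟩ := hs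
      constructor
      · unfold glueEdges
        left; right
        exact ⟨b, hb, r, hradj b hb, by rw [hfr b hb]⟩
      · simp only [Sym2.mem_diagSet, Sym2.isDiag_iff_proj_eq]
        exact fun h => hrbr b hb h.symm
    · simp only [Set.mem_iUnion] at hu
      obtain ⟨b, hb, he'⟩ := hu
      constructor
      · unfold glueEdges
        right
        simp only [Set.mem_iUnion]
        exact ⟨b, hb, (hK b hb).1 he'⟩
      · exact (GH b).not_isDiag_of_mem_edgeSet ((hK b hb).1 he')
  · -- degree condition
    intro v
    show Odd (degS Fhat v) ↔ _
    by_cases hvr : v = r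
    · subst hvr
      have hdeg : {e ∈ Fhat | v ∈ e} = (fun b => s(v, rb b)) '' B := by
        ext e
        simp only [Set.mem_setOf_eq, Set.mem_image]
        constructor
        · rintro ⟨he, hve⟩
          rcases (Set.mem_union _ _ _).mp he with hs | hu
          · obtain ⟨b, hb, rfl⟩ := hs
            exact ⟨b, hb, rfl⟩
          · exfalso
            simp only [Set.mem_iUnion] at hu
            obtain ⟨b, hb, he'⟩ := hu
            exact hSnS b hb v (hKedge b hb e he' v hve) hrSmem
        · rintro ⟨b, hb, rfl⟩
          exact ⟨Set.mem_union_left _ ⟨b, hb, rfl⟩, Sym2.mem_mk_left _ _⟩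
      have hdeg2 : degS Fhat v = B.ncard := by
        unfold degS
        rw [hdeg, Set.ncard_image_of_injOn]
        intro b hb b' hb' h
        exact hrb_inj b hb b' hb' (Sym2.congr_right.mp h)
      rw [hdeg2]
      have hvT : v ∈ glueT T B TH rb ↔ Odd B.ncard := by
        unfold glueT
        rw [Set.mem_union]
        constructor
        · rintro (h | h)
          · by_contra hc
            rw [heven hc] at h
            exact h.2 h.1
          · exfalso
            simp only [Set.mem_iUnion] at h
            obtain ⟨b, hb, hv'⟩ := h
            have : v ∈ SH b := by
              rcases Set.mem_symmDiff.mp hv' with ⟨h1, -⟩ | ⟨h1, -⟩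
              · exact hTS b hb h1
              · exact Set.mem_singleton_iff.mp h1 ▸ hrbSH b hb
            exact hSnS b hb v this hrSmem
        · intro h
          left
          rw [hodd h]
          exact ⟨Set.mem_union_right _ rfl, hrB⟩
      rw [hvT]
    · by_cases hvb : ∃ b ∈ B, v ∈ SH b
      · obtain ⟨b, hb, hvSH⟩ := hvb
        have hfilter : {e ∈ Fhat | v ∈ e} = {e ∈ W b | v ∈ e} := by
          ext e
          simp only [Set.mem_setOf_eq]
          constructor
          · rintro ⟨he, hve⟩
            refine ⟨?_, hve⟩
            rw [hFeq] at he
            simp only [Set.mem_iUnion, Set.Finite.mem_toFinset] at he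
            obtain ⟨b', hb', he'⟩ := he
            by_cases hbb : b = b'
            · exact hbb ▸ he'
            · exfalso
              rcases hWmem b' hb' e he' v hve with rfl | hv'
              · exact hvr rfl
              · exact Set.disjoint_left.mp (hdisj b hb b' hb' hbb) hvSH hv'
          · rintro ⟨he, hve⟩
            refine ⟨?_, hve⟩
            rw [hFeq]
            simp only [Set.mem_iUnion, Set.Finite.mem_toFinset]
            exact ⟨b, hb, he⟩
        have hdegW : degS Fhat v = (if v ∈ s(r, rb b) then 1 else 0) + degS (K b) v := by
          show {e ∈ Fhat | v ∈ e}.ncard = _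
          rw [hfilter]
          exact degS_insert (hsnotK b hb b hb) v
        have hTiff := memGlueT_of_memSH
          ⟨hGS, hBT, hTS0, hstab, hcov, ⟨hrSmem, hrB⟩, hradj, hodd, heven⟩
          hdisj hdisjS hTS hrbSH hb hvSH
        rw [hdegW, hTiff]
        have hKdeg := (hK b hb).2 v
        by_cases hvrb : v = rb b
        · subst hvrb
          rw [if_pos (Sym2.mem_mk_right _ _), add_comm, Nat.odd_add_one,
            Set.mem_symmDiff]
          rw [Nat.not_odd_iff_even] at *
          constructor
          · intro h
            right
            refine ⟨rfl, fun hc => ?_⟩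
            rw [← Nat.not_odd_iff_even] at h
            exact h (hKdeg.mpr hc)
          · rintro (⟨h1, h2⟩ | ⟨h1, h2⟩)
            · exact absurd rfl h2
            · rw [← Nat.not_odd_iff_even]
              intro hc
              exact h2 (hKdeg.mp hc)
        · have : v ∉ s(r, rb b) := by
            intro hc
            rcases Sym2.mem_iff.mp hc with rfl | rfl
            · exact hvr rfl
            · exact hvrb rfl
          rw [if_neg this, zero_add, Set.mem_symmDiff]
          constructor
          · intro h
            exact Or.inl ⟨hKdeg.mp h, fun hc => hvrb (Set.mem_singleton_iff.mp hc)⟩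
          · rintro (⟨h1, h2⟩ | ⟨h1, h2⟩)
            · exact hKdeg.mpr h1
            · exact absurd (Set.mem_singleton_iff.mp h1) hvrb
      · push_neg at hvb
        have hdeg0 : degS Fhat v = 0 := by
          apply degS_zero
          intro e he hv
          rw [hFeq] at he
          simp only [Set.mem_iUnion, Set.Finite.mem_toFinset] at he
          obtain ⟨b, hb, he'⟩ := he
          rcases hWmem b hb e he' v hv with rfl | hv'
          · exact hvr rfl
          · exact hvb b hb hv'
        rw [hdeg0]
        simp only [← Nat.not_even_iff_odd, Even.zero, not_true_eq_false, false_iff]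
        intro hc
        unfold glueT at hc
        rcases (Set.mem_union _ _ _).mp hc with h | h
        · rcases (Set.mem_union _ _ _).mp (rake_T_subset
            ⟨hGS, hBT, hTS0, hstab, hcov, ⟨hrSmem, hrB⟩, hradj, hodd, heven⟩ h.1) with h1 | h1
          · exact h.2 h1
          · exact hvr (Set.mem_singleton_iff.mp h1)
        · simp only [Set.mem_iUnion] at h
          obtain ⟨b, hb, hv'⟩ := h
          apply hvb b hb
          rcases Set.mem_symmDiff.mp hv' with ⟨h1, -⟩ | ⟨h1, -⟩
          · exact hTS b hb h1
          · exact Set.mem_singleton_iff.mp h1 ▸ hrbSH b hb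

end GlueFacts

section GlueLB

variable {S : Set V} {G : SimpleGraph V} {T : Set V} {r : V} {B : Set V}
  {SH : V → Set V} {GH : V → SimpleGraph V} {TH : V → Set V}
  {rb : V → V} {Ab : V → Set V} {f : V → V → V}

set_option maxHeartbeats 4000000 in
/-- Any join of a perturbation (inside `S \ B`) of the glued graft has at least
`∑ (m_b + 1)` edges. -/
lemma glue_lb
    (hrake : IsRakeOn S G T r B)
    (hdisj : ∀ b ∈ B, ∀ b' ∈ B, b ≠ b' → Disjoint (SH b) (SH b'))
    (hdisjS : ∀ b ∈ B, Disjoint (SH b) S)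
    (hf : ∀ b ∈ B, ∀ x : V, G.Adj x b → f b x ∈ Ab b)
    (hfr : ∀ b ∈ B, f b r = rb b)
    (hedge : ∀ b ∈ B, ∀ e ∈ (GH b).edgeSet, ∀ v ∈ e, v ∈ SH b)
    (hTS : ∀ b ∈ B, TH b ⊆ SH b)
    (hAS : ∀ b ∈ B, Ab b ⊆ SH b)
    (hTev : ∀ b ∈ B, Even (TH b).ncard)
    (K : V → Set (Sym2 V))
    (hQ : ∀ b ∈ B, ∀ Pb : Set V, Pb ⊆ Ab b → ∀ Jb : Set (Sym2 V),
      IsJoin (GH b) (symmDiff (TH b) Pb) Jb → (K b).ncard ≤ Jb.ncard)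
    {P : Set V} (hP : P ⊆ S \ B)
    {J : Set (Sym2 V)} (hJ : IsJoin (glueGraph G B GH f) (symmDiff (glueT T B TH rb) P) J) :
    ∑ b ∈ B.toFinite.toFinset, ((K b).ncard + 1) ≤ J.ncard := by
  obtain ⟨hGS, hBT, hTS0, hstab, hcov, ⟨hrSmem, hrB⟩, hradj, hodd, heven⟩ := hrake
  have hrbSH : ∀ b ∈ B, rb b ∈ SH b := fun b hb =>
    hAS b hb (hfr b hb ▸ hf b hb r (hradj b hb))
  have hSnS : ∀ b ∈ B, ∀ v ∈ SH b, v ∉ S := fun b hb v hv =>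
    Set.disjoint_left.mp (hdisjS b hb) hv
  have hxSB : ∀ b ∈ B, ∀ x : V, G.Adj x b → x ∈ S ∧ x ∉ B := by
    intro b hb x hx
    refine ⟨(hGS x b hx).1, fun hc => hstab x hc b hb hx⟩
  -- the two kinds of J-edges attached to the graft H_b
  set Jin : V → Set (Sym2 V) := fun b => {e ∈ J | e ∈ (GH b).edgeSet} with hJin
  set Jcr : V → Set (Sym2 V) := fun b => {e ∈ J | ∃ x, G.Adj x b ∧ e = s(x, f b x)} with hJcr
  have hJinSH : ∀ b ∈ B, ∀ e ∈ Jin b, ∀ v ∈ e, v ∈ SH b := fun b hb e he v hv =>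
    hedge b hb e he.2 v hv
  have hJcrSH : ∀ b ∈ B, ∀ e ∈ Jcr b, ∀ v ∈ e, (v ∈ S ∧ v ∉ B) ∨ v ∈ Ab b := by
    intro b hb e he v hv
    obtain ⟨-, x, hx, rfl⟩ := he
    rcases Sym2.mem_iff.mp hv with rfl | rfl
    · exact Or.inl (hxSB b hb v hx)
    · exact Or.inr (hf b hb x hx)
  have hdisj_in_cr : ∀ b ∈ B, ∀ b' ∈ B, Disjoint (Jin b) (Jcr b') := by
    intro b hb b' hb'
    rw [Set.disjoint_left]
    rintro e he ⟨-, x, hx, rfl⟩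
    exact hSnS b hb x (hJinSH b hb _ he x (Sym2.mem_mk_left _ _)) (hxSB b' hb' x hx).1
  have hdisj_in : ∀ b ∈ B, ∀ b' ∈ B, b ≠ b' → Disjoint (Jin b) (Jin b') := by
    intro b hb b' hb' hne
    rw [Set.disjoint_left]
    intro e he he'
    induction e using Sym2.inductionOn with
    | hf x y =>
      exact Set.disjoint_left.mp (hdisj b hb b' hb' hne)
        (hJinSH b hb _ he x (Sym2.mem_mk_left _ _))
        (hJinSH b' hb' _ he' x (Sym2.mem_mk_left _ _))
  have hdisj_cr : ∀ b ∈ B, ∀ b' ∈ B, b ≠ b' → Disjoint (Jcr b) (Jcr b') := by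
    intro b hb b' hb' hne
    rw [Set.disjoint_left]
    rintro e ⟨-, x, hx, rfl⟩ ⟨-, x', hx', he'⟩
    have hfSH : f b x ∈ SH b := hAS b hb (hf b hb x hx)
    have hfSH' : f b' x' ∈ SH b' := hAS b' hb' (hf b' hb' x' hx')
    rcases Sym2.eq_iff.mp he' with ⟨h1, h2⟩ | ⟨h1, h2⟩
    · rw [← h2] at hfSH'
      exact Set.disjoint_left.mp (hdisj b hb b' hb' hne) hfSH hfSH'
    · rw [h2] at hfSH
      exact hSnS b hb x' hfSH (hxSB b' hb' x' hx').1
  have hGedgeS : ∀ e ∈ G.edgeSet, ∀ v ∈ e, v ∈ S := by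
    intro e
    induction e using Sym2.inductionOn with
    | hf x y =>
      intro he v hv
      rcases Sym2.mem_iff.mp hv with rfl | rfl
      · exact (hGS v y he).1
      · exact (hGS x v he).2
  -- classification of J-edges meeting SH b
  have hclass : ∀ b ∈ B, ∀ e ∈ J, ∀ v ∈ e, v ∈ SH b → e ∈ Jin b ∨ e ∈ Jcr b := by
    intro b hb e heJ v hv hvSH
    have heE := hJ.1 heJ
    rw [glueGraph, SimpleGraph.edgeSet_fromEdgeSet, Set.mem_diff] at heE
    rcases heE.1 with (hrk | hcr) | hgr
    · exact absurd (hGedgeS e hrk.1 v hv) (hSnS b hb v hvSH)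
    · obtain ⟨b', hb', x, hx, rfl⟩ := hcr
      have : b' = b := by
        rcases Sym2.mem_iff.mp hv with rfl | rfl
        · exact absurd (hxSB b' hb' v hx).1 (hSnS b hb v hvSH)
        · by_contra hne
          exact Set.disjoint_left.mp (hdisj b hb b' hb' (Ne.symm hne))
            hvSH (hAS b' hb' (hf b' hb' x hx))
      subst this
      exact Or.inr ⟨heJ, x, hx, rfl⟩
    · simp only [Set.mem_iUnion] at hgr
      obtain ⟨b', hb', he'⟩ := hgr
      have : b' = b := by
        by_contra hne
        exact Set.disjoint_left.mp (hdisj b hb b' hb' (Ne.symm hne))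
          hvSH (hedge b' hb' _ he' v hv)
      subst this
      exact Or.inl ⟨heJ, he'⟩
  have hdegJ : ∀ b ∈ B, ∀ v ∈ SH b, degS J v = degS (Jin b) v + degS (Jcr b) v := by
    intro b hb v hv
    have hset : {e ∈ J | v ∈ e} = {e ∈ Jin b ∪ Jcr b | v ∈ e} := by
      ext e
      simp only [Set.mem_setOf_eq, Set.mem_union]
      constructor
      · rintro ⟨he, hve⟩
        exact ⟨hclass b hb e he v hve hv, hve⟩
      · rintro ⟨he, hve⟩
        rcases he with h | h
        · exact ⟨h.1, hve⟩
        · exact ⟨h.1, hve⟩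
    show {e ∈ J | v ∈ e}.ncard = _
    rw [hset]
    exact degS_union (hdisj_in_cr b hb b hb) v
  set X : V → Set V := fun b => {v ∈ SH b | Odd (degS (Jcr b) v)} with hX
  have hcrne : ∀ b v, Odd (degS (Jcr b) v) → {e ∈ Jcr b | v ∈ e}.Nonempty := by
    intro b v hodd'
    rw [Set.nonempty_iff_ne_empty]
    intro hc
    rw [show degS (Jcr b) v = 0 from by unfold degS; rw [hc]; simp] at hodd'
    simp at hodd'
  have hXsub : ∀ b ∈ B, X b ⊆ Ab b := by
    intro b hb v hv
    obtain ⟨hvSH, hodd'⟩ := hv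
    obtain ⟨e, he, hve⟩ := hcrne b v hodd'
    rcases hJcrSH b hb e he v hve with ⟨hvS, -⟩ | h
    · exact absurd hvS (hSnS b hb v hvSH)
    · exact h
  have hJoinIn : ∀ b ∈ B,
      IsJoin (GH b) (symmDiff (TH b) (symmDiff {rb b} (X b))) (Jin b) := by
    intro b hb
    refine ⟨fun e he => he.2, fun v => ?_⟩
    show Odd (degS (Jin b) v) ↔ _
    by_cases hv : v ∈ SH b
    · have hvP : v ∉ P := fun hc => hSnS b hb v hv (hP hc).1
      have hglue := memGlueT_of_memSH
        ⟨hGS, hBT, hTS0, hstab, hcov, ⟨hrSmem, hrB⟩, hradj, hodd, heven⟩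
        hdisj hdisjS hTS hrbSH hb hv
      have hmem : v ∈ symmDiff (glueT T B TH rb) P ↔ v ∈ symmDiff (TH b) {rb b} := by
        rw [Set.mem_symmDiff]
        constructor
        · rintro (⟨ha, -⟩ | ⟨ha, -⟩)
          · exact hglue.mp ha
          · exact absurd ha hvP
        · intro ha
          exact Or.inl ⟨hglue.mpr ha, hvP⟩
      have h1 : Odd (degS J v) ↔ v ∈ symmDiff (TH b) {rb b} := (hJ.2 v).trans hmem
      rw [hdegJ b hb v hv, Nat.odd_add, ← Nat.not_odd_iff_even] at h1
      have hx : v ∈ X b ↔ Odd (degS (Jcr b) v) := by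
        simp only [hX, Set.mem_setOf_eq]
        exact and_iff_right hv
      rw [Set.mem_symmDiff, Set.mem_singleton_iff] at h1
      rw [Set.mem_symmDiff, Set.mem_symmDiff, Set.mem_singleton_iff, hx]
      tauto
    · have h0 : degS (Jin b) v = 0 :=
        degS_zero (fun e he hve => hv (hJinSH b hb e he v hve))
      rw [show Odd (degS (Jin b) v) ↔ Odd 0 from by rw [h0]]
      simp only [← Nat.not_even_iff_odd, Even.zero, not_true_eq_false, false_iff]
      intro hc
      rcases Set.mem_symmDiff.mp hc with ⟨h1, -⟩ | ⟨h1, -⟩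
      · exact hv (hTS b hb h1)
      · rcases Set.mem_symmDiff.mp h1 with ⟨h2, -⟩ | ⟨h2, -⟩
        · exact hv (Set.mem_singleton_iff.mp h2 ▸ hrbSH b hb)
        · exact hv h2.1
  have hKle : ∀ b ∈ B, (K b).ncard ≤ (Jin b).ncard := by
    intro b hb
    apply hQ b hb (symmDiff {rb b} (X b)) ?_ _ (hJoinIn b hb)
    intro v hv'
    rcases Set.mem_symmDiff.mp hv' with ⟨h1, -⟩ | ⟨h1, -⟩
    · exact Set.mem_singleton_iff.mp h1 ▸ (hfr b hb ▸ hf b hb r (hradj b hb))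
    · exact hXsub b hb h1
  have hcr1 : ∀ b ∈ B, 1 ≤ (Jcr b).ncard := by
    intro b hb
    have hoddset : {v | Odd (degS (Jin b) v)}
        = symmDiff (TH b) (symmDiff {rb b} (X b)) := by
      ext v
      exact (hJoinIn b hb).2 v
    have hev := even_oddDegSet (Jin b)
      (fun e he => (GH b).not_isDiag_of_mem_edgeSet he.2)
    rw [hoddset, even_symmDiff_ncard, even_symmDiff_ncard] at hev
    have h1 : ¬ Even ({rb b} : Set V).ncard := by
      simp [Set.ncard_singleton]
    have hxodd : ¬ Even (X b).ncard := by
      have h2 := hTev b hb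
      tauto
    have hXne : (X b).Nonempty := by
      rw [Set.nonempty_iff_ne_empty]
      intro hc
      rw [hc] at hxodd
      simp at hxodd
    obtain ⟨v, hvSH, hvodd⟩ := hXne
    obtain ⟨e, he, -⟩ := hcrne b v hvodd
    exact (Set.ncard_pos (Set.toFinite _)).mpr ⟨e, he⟩
  -- sum up
  set U : V → Set (Sym2 V) := fun b => Jin b ∪ Jcr b with hU
  have hUdisj : ∀ b ∈ B, ∀ b' ∈ B, b ≠ b' → Disjoint (U b) (U b') := by
    intro b hb b' hb' hne
    refine Set.disjoint_union_left.mpr ⟨?_, ?_⟩ <;>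
      refine Set.disjoint_union_right.mpr ⟨?_, ?_⟩
    · exact hdisj_in b hb b' hb' hne
    · exact hdisj_in_cr b hb b' hb'
    · exact (hdisj_in_cr b' hb' b hb).symm
    · exact hdisj_cr b hb b' hb' hne
  have hUsub : (⋃ b ∈ B.toFinite.toFinset, U b) ⊆ J := by
    refine Set.iUnion₂_subset fun b hb => ?_
    rintro e (he | he)
    · exact he.1
    · exact he.1
  calc ∑ b ∈ B.toFinite.toFinset, ((K b).ncard + 1)
      ≤ ∑ b ∈ B.toFinite.toFinset, (U b).ncard := by
        refine Finset.sum_le_sum fun b hb => ?_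
        rw [Set.Finite.mem_toFinset] at hb
        rw [hU]
        simp only
        rw [Set.ncard_union_eq (hdisj_in_cr b hb b hb)]
        exact add_le_add (hKle b hb) (hcr1 b hb)
    _ = (⋃ b ∈ B.toFinite.toFinset, U b).ncard := by
        rw [ncard_biUnion]
        intro i hi j hj hij
        rw [Set.Finite.mem_toFinset] at hi hj
        exact hUdisj i hi j hj hij
    _ ≤ J.ncard := Set.ncard_le_ncard hUsub (Set.toFinite J)

end GlueLB

section Rake

variable {S : Set V} {G : SimpleGraph V} {T : Set V} {r : V} {B : Set V}

lemma edge_mem_support (hGS : ∀ x y : V, G.Adj x y → x ∈ S ∧ y ∈ S) :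
    ∀ e ∈ G.edgeSet, ∀ v ∈ e, v ∈ S := by
  intro e
  induction e using Sym2.inductionOn with
  | hf x y =>
    intro he v hv
    rcases Sym2.mem_iff.mp hv with rfl | rfl
    · exact (hGS v y he).1
    · exact (hGS x v he).2

lemma adj_of_mem_edge {e : Sym2 V} (he : e ∈ G.edgeSet) {a c : V}
    (ha : a ∈ e) (hc : c ∈ e) (hne : a ≠ c) : G.Adj a c := by
  induction e using Sym2.inductionOn with
  | hf x y =>
    rcases Sym2.mem_iff.mp ha with rfl | rfl <;> rcases Sym2.mem_iff.mp hc with rfl | rfl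
    · exact absurd rfl hne
    · exact he
    · exact G.adj_symm he
    · exact absurd rfl hne

lemma rake_even_T (hrake : IsRakeOn S G T r B) : Even T.ncard := by
  obtain ⟨-, -, -, -, -, ⟨-, hrB⟩, -, hodd, heven⟩ := hrake
  by_cases h : Odd B.ncard
  · rw [hodd h, Set.union_singleton, Set.ncard_insert_of_notMem hrB]
    rw [Nat.even_add_one, Nat.not_even_iff_odd]
    exact h
  · rw [heven h]
    exact Nat.not_odd_iff_even.mp h

lemma rake_star_join (hrake : IsRakeOn S G T r B) :
    IsJoin G T {e : Sym2 V | ∃ b ∈ B, e = s(r, b)} ∧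
      {e : Sym2 V | ∃ b ∈ B, e = s(r, b)}.ncard = B.ncard := by
  obtain ⟨hGS, hBT, hTS0, hstab, hcov, ⟨hrSmem, hrB⟩, hradj, hodd, heven⟩ := hrake
  have hbr : ∀ b ∈ B, b ≠ r := fun b hb h => hrB (h ▸ hb)
  have hcard : {e : Sym2 V | ∃ b ∈ B, e = s(r, b)}.ncard = B.ncard := by
    rw [show {e : Sym2 V | ∃ b ∈ B, e = s(r, b)} = (fun b => s(r, b)) '' B by
      ext e
      simp only [Set.mem_setOf_eq, Set.mem_image]
      constructor
      · rintro ⟨b, hb, rfl⟩; exact ⟨b, hb, rfl⟩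
      · rintro ⟨b, hb, rfl⟩; exact ⟨b, hb, rfl⟩]
    exact Set.ncard_image_of_injOn fun b hb b' hb' h => Sym2.congr_right.mp h
  refine ⟨⟨?_, ?_⟩, hcard⟩
  · rintro e ⟨b, hb, rfl⟩
    exact hradj b hb
  · intro v
    show Odd (degS {e : Sym2 V | ∃ b ∈ B, e = s(r, b)} v) ↔ v ∈ T
    by_cases hvr : v = r
    · subst hvr
      have : {e ∈ {e : Sym2 V | ∃ b ∈ B, e = s(v, b)} | v ∈ e}
          = {e : Sym2 V | ∃ b ∈ B, e = s(v, b)} := by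
        ext e
        simp only [Set.mem_setOf_eq]
        constructor
        · exact fun h => h.1
        · rintro ⟨b, hb, rfl⟩
          exact ⟨⟨b, hb, rfl⟩, Sym2.mem_mk_left _ _⟩
      rw [show degS {e : Sym2 V | ∃ b ∈ B, e = s(v, b)} v
          = {e : Sym2 V | ∃ b ∈ B, e = s(v, b)}.ncard from by unfold degS; rw [this]]
      rw [hcard]
      by_cases h : Odd B.ncard
      · simp only [h, true_iff]
        rw [hodd h]
        exact Set.mem_union_right _ rfl
      · simp only [h, false_iff]
        rw [heven h]
        exact hrB
    · by_cases hvB : v ∈ B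
      · have : {e ∈ {e : Sym2 V | ∃ b ∈ B, e = s(r, b)} | v ∈ e} = {s(r, v)} := by
          ext e
          simp only [Set.mem_setOf_eq, Set.mem_singleton_iff]
          constructor
          · rintro ⟨⟨b, hb, rfl⟩, hv⟩
            rcases Sym2.mem_iff.mp hv with rfl | rfl
            · exact absurd rfl hvr
            · rfl
          · rintro rfl
            exact ⟨⟨v, hvB, rfl⟩, Sym2.mem_mk_right _ _⟩
        rw [show degS {e : Sym2 V | ∃ b ∈ B, e = s(r, b)} v = 1 from by
          unfold degS; rw [this]; exact Set.ncard_singleton _]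
        simp only [odd_one, true_iff]
        exact hBT hvB
      · rw [show degS {e : Sym2 V | ∃ b ∈ B, e = s(r, b)} v = 0 from degS_zero ?_]
        · simp only [← Nat.not_even_iff_odd, Even.zero, not_true_eq_false, false_iff]
          intro hc
          rcases (Set.mem_union _ _ _).mp (rake_T_subset
            ⟨hGS, hBT, hTS0, hstab, hcov, ⟨hrSmem, hrB⟩, hradj, hodd, heven⟩ hc) with h | h
          · exact hvB h
          · exact hvr (Set.mem_singleton_iff.mp h)
        · rintro e ⟨b, hb, rfl⟩ hv
          rcases Sym2.mem_iff.mp hv with rfl | rfl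
          · exact hvr rfl
          · exact hvB hb

lemma rake_lb (hrake : IsRakeOn S G T r B) {P : Set V} (hP : P ⊆ S \ B)
    {J : Set (Sym2 V)} (hJ : IsJoin G (symmDiff T P) J) : B.ncard ≤ J.ncard := by
  obtain ⟨hGS, hBT, hTS0, hstab, hcov, ⟨hrSmem, hrB⟩, hradj, hodd, heven⟩ := hrake
  have hchoice : ∀ b, ∃ e, b ∈ B → (e ∈ J ∧ b ∈ e) := by
    intro b
    by_cases hb : b ∈ B
    swap
    · exact ⟨s(b, b), fun hc => absurd hc hb⟩
    have hbT : b ∈ symmDiff T P :=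
      Set.mem_symmDiff.mpr (Or.inl ⟨hBT hb, fun hc => (hP hc).2 hb⟩)
    have hodd' : Odd (degS J b) := (hJ.2 b).mpr hbT
    have hne : {e ∈ J | b ∈ e}.Nonempty := by
      rw [Set.nonempty_iff_ne_empty]
      intro hc
      rw [show degS J b = 0 from by unfold degS; rw [hc]; simp] at hodd'
      simp at hodd'
    obtain ⟨e, he, hbe⟩ := hne
    exact ⟨e, fun _ => ⟨he, hbe⟩⟩
  choose g hg using hchoice
  apply Set.ncard_le_ncard_of_injOn g (fun b hb => (hg b hb).1)
  · intro b hb b' hb' h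
    by_contra hne
    exact hstab b hb b' hb'
      (adj_of_mem_edge (hJ.1 ((hg b hb).1)) ((hg b hb).2) (h ▸ (hg b' hb').2) hne)

end Rake

lemma exists_minJoin {H : SimpleGraph V} {T : Set V} (h : ∃ F, IsJoin H T F) :
    ∃ F, IsMinJoin H T F := by
  obtain ⟨F0, hF0⟩ := h
  have hne : {n : ℕ | ∃ F, IsJoin H T F ∧ F.ncard = n}.Nonempty := ⟨F0.ncard, F0, hF0, rfl⟩
  obtain ⟨F, hF, hFn⟩ := Nat.sInf_mem hne
  refine ⟨F, hF, fun F' hF' => ?_⟩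
  rw [hFn]
  exact Nat.sInf_le ⟨F', hF', rfl⟩

lemma even_sum_of_odd {ι : Type*} (s : Finset ι) (g : ι → ℕ) (h : ∀ i ∈ s, Odd (g i)) :
    (Even (∑ i ∈ s, g i) ↔ Even s.card) := by
  classical
  induction s using Finset.induction_on with
  | empty => simp
  | @insert a s ha ih =>
    rw [Finset.sum_insert ha, Finset.card_insert_of_notMem ha, Nat.even_add,
      Nat.even_add_one, ih (fun i hi => h i (Finset.mem_insert_of_mem hi))]
    have := h a (Finset.mem_insert_self a s)
    rw [← Nat.not_even_iff_odd] at this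
    tauto

/-- The inductive invariant carried along `PClass`. -/
def GoodCtx (S : Set V) (H : SimpleGraph V) (T : Set V) (r : V) (A : Set V) : Prop :=
  (∀ e ∈ H.edgeSet, ∀ v ∈ e, v ∈ S) ∧ T ⊆ S ∧ A ⊆ S ∧ r ∈ A ∧ Even T.ncard ∧
  (∃ F, IsJoin H T F) ∧
  (∀ F, IsMinJoin H T F → ∀ P : Set V, P ⊆ A → ∀ J, IsJoin H (symmDiff T P) J →
    F.ncard ≤ J.ncard)

set_option maxHeartbeats 1000000 in
lemma pclass_good {S : Set V} {H : SimpleGraph V} {T : Set V} {r : V} {A : Set V}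
    (hp : PClass S H T r A) : GoodCtx S H T r A := by
  induction hp with
  | base S G T r B hrake =>
    obtain ⟨hGS, hBT, hTS0, hstab, hcov, ⟨hrSmem, hrB⟩, hradj, hodd, heven⟩ := hrake
    have hrake' : IsRakeOn S G T r B :=
      ⟨hGS, hBT, hTS0, hstab, hcov, ⟨hrSmem, hrB⟩, hradj, hodd, heven⟩
    obtain ⟨hstar, hstarcard⟩ := rake_star_join hrake'
    refine ⟨edge_mem_support hGS, hTS0, Set.diff_subset, ⟨hrSmem, hrB⟩, rake_even_T hrake',
      ⟨_, hstar⟩, ?_⟩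
    intro F hF P hP J hJ
    calc F.ncard ≤ _ := hF.2 _ hstar
      _ = B.ncard := hstarcard
      _ ≤ J.ncard := rake_lb hrake' hP hJ
  | glue S G T r B SH GH TH rb Ab f hrake hPb hdisj hdisjS hf hfr ih =>
    obtain ⟨hGS, hBT, hTS0, hstab, hcov, ⟨hrSmem, hrB⟩, hradj, hodd, heven⟩ := hrake
    have hrake' : IsRakeOn S G T r B :=
      ⟨hGS, hBT, hTS0, hstab, hcov, ⟨hrSmem, hrB⟩, hradj, hodd, heven⟩
    have hedge : ∀ b ∈ B, ∀ e ∈ (GH b).edgeSet, ∀ v ∈ e, v ∈ SH b := fun b hb => (ih b hb).1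
    have hTHS : ∀ b ∈ B, TH b ⊆ SH b := fun b hb => (ih b hb).2.1
    have hAS : ∀ b ∈ B, Ab b ⊆ SH b := fun b hb => (ih b hb).2.2.1
    have hTev : ∀ b ∈ B, Even (TH b).ncard := fun b hb => (ih b hb).2.2.2.2.1
    have hKex : ∀ b, ∃ K, b ∈ B → IsMinJoin (GH b) (TH b) K := by
      intro b
      by_cases hb : b ∈ B
      · obtain ⟨K, hK⟩ := exists_minJoin (ih b hb).2.2.2.2.2.1
        exact ⟨K, fun _ => hK⟩
      · exact ⟨∅, fun hc => absurd hc hb⟩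
    choose K hK using hKex
    have hQ : ∀ b ∈ B, ∀ Pb : Set V, Pb ⊆ Ab b → ∀ Jb : Set (Sym2 V),
        IsJoin (GH b) (symmDiff (TH b) Pb) Jb → (K b).ncard ≤ Jb.ncard :=
      fun b hb Pb hPb Jb hJb => (ih b hb).2.2.2.2.2.2 (K b) (hK b hb) Pb hPb Jb hJb
    have hrbSH : ∀ b ∈ B, rb b ∈ SH b := fun b hb =>
      hAS b hb (hfr b hb ▸ hf b hb r (hradj b hb))
    have hpieceSH : ∀ b ∈ B, symmDiff (TH b) {rb b} ⊆ SH b := by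
      intro b hb v hv
      rcases Set.mem_symmDiff.mp hv with ⟨h1, -⟩ | ⟨h1, -⟩
      · exact hTHS b hb h1
      · exact Set.mem_singleton_iff.mp h1 ▸ hrbSH b hb
    obtain ⟨hjoin, hjcard⟩ := glue_join hrake' hdisj hdisjS hf hfr hedge hTHS hAS K
      (fun b hb => (hK b hb).1)
    refine ⟨?_, ?_, ?_, ⟨hrSmem, hrB⟩, ?_, ⟨_, hjoin⟩, ?_⟩
    · -- all edges of the glued graph lie in the glued support
      intro e he v hv
      rw [glueGraph, SimpleGraph.edgeSet_fromEdgeSet] at he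
      show v ∈ (S \ B) ∪ ⋃ b ∈ B, SH b
      rcases he.1 with (hrk | hcr) | hgr
      · exact Set.mem_union_left _ ⟨edge_mem_support hGS e hrk.1 v hv, hrk.2 v hv⟩
      · obtain ⟨b, hb, x, hx, rfl⟩ := hcr
        rcases Sym2.mem_iff.mp hv with rfl | rfl
        · exact Set.mem_union_left _ ⟨(hGS v b hx).1, fun hc => hstab v hc b hb hx⟩
        · refine Set.mem_union_right _ ?_
          simp only [Set.mem_iUnion]
          exact ⟨b, hb, hAS b hb (hf b hb x hx)⟩
      · simp only [Set.mem_iUnion] at hgr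
        obtain ⟨b, hb, he'⟩ := hgr
        refine Set.mem_union_right _ ?_
        simp only [Set.mem_iUnion]
        exact ⟨b, hb, hedge b hb e he' v hv⟩
    · -- glued T-set lies in the glued support
      intro v hv
      show v ∈ (S \ B) ∪ ⋃ b ∈ B, SH b
      rcases (Set.mem_union _ _ _).mp hv with h | h
      · exact Set.mem_union_left _ ⟨hTS0 h.1, h.2⟩
      · simp only [Set.mem_iUnion] at h
        obtain ⟨b, hb, h'⟩ := h
        refine Set.mem_union_right _ ?_
        simp only [Set.mem_iUnion]
        exact ⟨b, hb, hpieceSH b hb h'⟩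
    · -- S \ B lies in the glued support
      intro v hv
      show v ∈ (S \ B) ∪ ⋃ b ∈ B, SH b
      exact Set.mem_union_left _ hv
    · -- the glued T-set has even cardinality
      have hdisjT : Disjoint (T \ B) (⋃ b ∈ B, symmDiff (TH b) {rb b}) := by
        rw [Set.disjoint_left]
        intro v hv hc
        simp only [Set.mem_iUnion] at hc
        obtain ⟨b, hb, h'⟩ := hc
        exact Set.disjoint_left.mp (hdisjS b hb) (hpieceSH b hb h') (hTS0 hv.1)
      have hUrw : (⋃ b ∈ B, symmDiff (TH b) {rb b})
          = ⋃ b ∈ B.toFinite.toFinset, symmDiff (TH b) {rb b} := by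
        ext v
        simp only [Set.mem_iUnion, Set.Finite.mem_toFinset]
      have hodd_piece : ∀ b ∈ B.toFinite.toFinset, Odd (symmDiff (TH b) {rb b}).ncard := by
        intro b hb
        rw [Set.Finite.mem_toFinset] at hb
        rw [← Nat.not_even_iff_odd, even_symmDiff_ncard]
        intro hc
        rw [Set.ncard_singleton] at hc
        exact (by simp : ¬ Even 1) (hc.mp (hTev b hb))
      have hTB : (T \ B).ncard = if Odd B.ncard then 1 else 0 := by
        by_cases hBodd : Odd B.ncard
        · rw [if_pos hBodd, hodd hBodd]
          rw [show (B ∪ {r}) \ B = {r} by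
            ext v
            simp only [Set.mem_diff, Set.mem_union, Set.mem_singleton_iff]
            constructor
            · rintro ⟨h1 | h1, h2⟩
              · exact absurd h1 h2
              · exact h1
            · rintro rfl
              exact ⟨Or.inr rfl, hrB⟩]
          exact Set.ncard_singleton r
        · rw [if_neg hBodd, heven hBodd]
          simp
      have hsum : Even (∑ b ∈ B.toFinite.toFinset, (symmDiff (TH b) {rb b}).ncard)
          ↔ Even B.ncard := by
        rw [even_sum_of_odd _ _ hodd_piece, Set.ncard_eq_toFinset_card B (Set.toFinite B)]
      show Even ((T \ B) ∪ ⋃ b ∈ B, symmDiff (TH b) {rb b}).ncard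
      rw [Set.ncard_union_eq hdisjT, hUrw, ncard_biUnion _ _
        (fun i hi j hj hij => (hdisj i (B.toFinite.mem_toFinset.mp hi)
          j (B.toFinite.mem_toFinset.mp hj) hij).mono
          (hpieceSH i (B.toFinite.mem_toFinset.mp hi))
          (hpieceSH j (B.toFinite.mem_toFinset.mp hj))),
        Nat.even_add, hTB, hsum]
      by_cases hBodd : Odd B.ncard
      · rw [if_pos hBodd]
        exact iff_of_false (by simp) (Nat.not_even_iff_odd.mpr hBodd)
      · rw [if_neg hBodd]
        exact iff_of_true Even.zero (Nat.not_odd_iff_even.mp hBodd)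
    · -- the minimality bound
      intro F hF P hP' J hJ
      calc F.ncard ≤ _ := hF.2 _ hjoin
        _ = ∑ b ∈ B.toFinite.toFinset, ((K b).ncard + 1) := hjcard
        _ ≤ J.ncard := glue_lb hrake' hdisj hdisjS hf hfr hedge hTHS hAS hTev K hQ hP' hJ

set_option maxHeartbeats 1000000


/-- given a rake `(G, T)` with head `r` and tooth set `B`, members
`(GH b, TH b) ∈ P(rb b, Ab b)` for `b ∈ B` (mutually disjoint and disjoint from the
rake), and connected minimum joins `FH b` of `(GH b, TH b)` covering `rb b`, the set
`F̂ = {r r_b : b ∈ B} ∪ ⋃_{b ∈ B} FH b` is a connected minimum join of the gluing sum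
`(Ĝ, T̂)` covering `r`. -/
theorem stmt_14 (S : Set V) (G : SimpleGraph V) (T : Set V) (r : V) (B : Set V)
    (SH : V → Set V) (GH : V → SimpleGraph V) (TH : V → Set V)
    (rb : V → V) (Ab : V → Set V) (f : V → V → V)
    (hrake : IsRakeOn S G T r B)
    (hP : ∀ b ∈ B, PClass (SH b) (GH b) (TH b) (rb b) (Ab b))
    (hdisj : ∀ b ∈ B, ∀ b' ∈ B, b ≠ b' → Disjoint (SH b) (SH b'))
    (hdisjS : ∀ b ∈ B, Disjoint (SH b) S)
    (hf : ∀ b ∈ B, ∀ x : V, G.Adj x b → f b x ∈ Ab b)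
    (hfr : ∀ b ∈ B, f b r = rb b)
    (FH : V → Set (Sym2 V))
    (hFH : ∀ b ∈ B, IsMinJoin (GH b) (TH b) (FH b) ∧
      ConnectedEdgeSet (FH b) ∧ Covers (FH b) (rb b)) :
    IsMinJoin (glueGraph G B GH f) (glueT T B TH rb)
      ({e : Sym2 V | ∃ b ∈ B, e = s(r, rb b)} ∪ ⋃ b ∈ B, FH b) ∧
    ConnectedEdgeSet ({e : Sym2 V | ∃ b ∈ B, e = s(r, rb b)} ∪ ⋃ b ∈ B, FH b) ∧
    Covers ({e : Sym2 V | ∃ b ∈ B, e = s(r, rb b)} ∪ ⋃ b ∈ B, FH b) r := by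
  obtain ⟨hGS, hBT, hTS0, hstab, hcov, ⟨hrSmem, hrB⟩, hradj, hodd, heven⟩ := hrake
  have hrake' : IsRakeOn S G T r B :=
    ⟨hGS, hBT, hTS0, hstab, hcov, ⟨hrSmem, hrB⟩, hradj, hodd, heven⟩
  have hgood : ∀ b ∈ B, GoodCtx (SH b) (GH b) (TH b) (rb b) (Ab b) := fun b hb =>
    pclass_good (hP b hb)
  have hedge : ∀ b ∈ B, ∀ e ∈ (GH b).edgeSet, ∀ v ∈ e, v ∈ SH b := fun b hb =>
    (hgood b hb).1
  have hTHS : ∀ b ∈ B, TH b ⊆ SH b := fun b hb => (hgood b hb).2.1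
  have hAS : ∀ b ∈ B, Ab b ⊆ SH b := fun b hb => (hgood b hb).2.2.1
  have hTev : ∀ b ∈ B, Even (TH b).ncard := fun b hb => (hgood b hb).2.2.2.2.1
  have hQ : ∀ b ∈ B, ∀ Pb : Set V, Pb ⊆ Ab b → ∀ Jb : Set (Sym2 V),
      IsJoin (GH b) (symmDiff (TH b) Pb) Jb → (FH b).ncard ≤ Jb.ncard :=
    fun b hb Pb hPb Jb hJb => (hgood b hb).2.2.2.2.2.2 (FH b) (hFH b hb).1 Pb hPb Jb hJb
  have hrbSH : ∀ b ∈ B, rb b ∈ SH b := fun b hb =>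
    hAS b hb (hfr b hb ▸ hf b hb r (hradj b hb))
  have hrbne : ∀ b ∈ B, r ≠ rb b := fun b hb h =>
    Set.disjoint_left.mp (hdisjS b hb) (h ▸ hrbSH b hb) hrSmem
  obtain ⟨hjoin, hjcard⟩ := glue_join hrake' hdisj hdisjS hf hfr hedge hTHS hAS FH
    (fun b hb => (hFH b hb).1.1)
  obtain ⟨b0, hb0, -⟩ := hcov r ⟨hrSmem, hrB⟩
  have hmemhat : s(r, rb b0) ∈
      ({e : Sym2 V | ∃ b ∈ B, e = s(r, rb b)} ∪ ⋃ b ∈ B, FH b) :=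
    Set.mem_union_left _ ⟨b0, hb0, rfl⟩
  have hadjhat : ∀ b ∈ B, (SimpleGraph.fromEdgeSet
      ({e : Sym2 V | ∃ b ∈ B, e = s(r, rb b)} ∪ ⋃ b ∈ B, FH b)).Adj r (rb b) := by
    intro b hb
    rw [SimpleGraph.fromEdgeSet_adj]
    exact ⟨Set.mem_union_left _ ⟨b, hb, rfl⟩, hrbne b hb⟩
  refine ⟨⟨hjoin, ?_⟩, ⟨⟨s(r, rb b0), hmemhat⟩, ?_⟩,
    ⟨s(r, rb b0), hmemhat, Sym2.mem_mk_left _ _⟩⟩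
  · -- minimality
    intro F' hF'
    rw [hjcard]
    have hJ' : IsJoin (glueGraph G B GH f) (symmDiff (glueT T B TH rb) (∅ : Set V)) F' := by
      rwa [show symmDiff (glueT T B TH rb) (∅ : Set V) = glueT T B TH rb by
        rw [← Set.bot_eq_empty, symmDiff_bot]]
    exact glue_lb hrake' hdisj hdisjS hf hfr hedge hTHS hAS hTev FH hQ
      (Set.empty_subset _) hJ'
  · -- connectivity
    have key : ∀ z, Covers ({e : Sym2 V | ∃ b ∈ B, e = s(r, rb b)} ∪ ⋃ b ∈ B, FH b) z →
        (SimpleGraph.fromEdgeSet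
          ({e : Sym2 V | ∃ b ∈ B, e = s(r, rb b)} ∪ ⋃ b ∈ B, FH b)).Reachable z r := by
      rintro z ⟨e, he, hze⟩
      rcases (Set.mem_union _ _ _).mp he with hs | hu
      · obtain ⟨b, hb, rfl⟩ := hs
        rcases Sym2.mem_iff.mp hze with rfl | rfl
        · rfl
        · exact ((hadjhat b hb).symm).reachable
      · simp only [Set.mem_iUnion] at hu
        obtain ⟨b, hb, he'⟩ := hu
        have h1 : (SimpleGraph.fromEdgeSet (FH b)).Reachable z (rb b) :=
          (hFH b hb).2.1.2 z (rb b) ⟨e, he', hze⟩ (hFH b hb).2.2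
        have h2 : (SimpleGraph.fromEdgeSet
            ({e : Sym2 V | ∃ b ∈ B, e = s(r, rb b)} ∪ ⋃ b ∈ B, FH b)).Reachable z (rb b) :=
          h1.mono (SimpleGraph.fromEdgeSet_mono
            (fun e' he'' => Set.mem_union_right _ (Set.mem_biUnion hb he'')))
        exact h2.trans ((hadjhat b hb).symm).reachable
    intro x y hx hy
    exact (key x hx).trans (key y hy).symm
end
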